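/- The social welfare sw(S, x) = tr{Sᵀ[(ΛD − B) ⊙ W]S} + tr(W·B) with λᵢ = λ for all i attains its maximum value λ·ψ·Σ_{i,j} W_{ij} exactly when all agents belong to a single community and all opinions are equal (so D_{ij} = ψ for all i,j). -/
import Mathlib


open Finset

lemma sum01' {α : Type*} (t : Finset α) (f : α → ℝ)
    (h : ∀ a ∈ t, f a = 0 ∨ f a = 1) : ∑ a ∈ t, f a = 0 ∨ 1 ≤ ∑ a ∈ t, f a := by
  classical
  induction t using Finset.induction_on with
  | empty => left; simp
  | @insert a s ha ih =>
    rw [Finset.sum_insert ha]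
    have h0 : ∀ b ∈ s, f b = 0 ∨ f b = 1 := fun b hb => h b (Finset.mem_insert_of_mem hb)
    have hnn : 0 ≤ ∑ b ∈ s, f b :=
      Finset.sum_nonneg fun b hb => by rcases h0 b hb with h | h <;> simp [h]
    rcases h a (Finset.mem_insert_self a s) with h1 | h1
    · rcases ih h0 with h2 | h2
      · left; rw [h1, h2]; ring
      · right; rw [h1]; linarith
    · right; rw [h1]; linarith

lemma key15 (ψ lamv d s w : ℝ) (hψ0 : 0 < ψ) (hlam : 1 < lamv)
    (hd : d ≤ ψ) (hs : s = 0 ∨ s = 1) (hw : 0 ≤ w) :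
    lamv * s * d * w + (1 - s) * max d 0 * w ≤ lamv * ψ * w ∧
    (lamv * s * d * w + (1 - s) * max d 0 * w = lamv * ψ * w ↔ (0 < w → s = 1 ∧ d = ψ)) := by
  have hm : max d 0 ≤ ψ := max_le hd hψ0.le
  have hmn : 0 ≤ max d 0 := le_max_right _ _
  rcases hs with hs | hs <;> subst hs
  · simp only [mul_zero, zero_mul, sub_zero, one_mul, zero_add]
    have hlt : max d 0 < lamv * ψ := lt_of_le_of_lt hm (by nlinarith)
    constructor
    · nlinarith
    · constructor
      · intro h hwpos
        exfalso; nlinarith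
      · intro h
        rcases eq_or_lt_of_le hw with hw0 | hwpos
        · rw [← hw0]; ring
        · exact absurd (h hwpos).1 zero_ne_one
  · simp only [mul_one, sub_self, zero_mul, add_zero]
    have hlpos : (0:ℝ) < lamv := by linarith
    constructor
    · nlinarith [mul_le_mul_of_nonneg_right (mul_le_mul_of_nonneg_left hd hlpos.le) hw]
    · constructor
      · intro h hwpos
        refine ⟨trivial, ?_⟩
        have hlw : 0 < lamv * w := mul_pos hlpos hwpos
        nlinarith
      · intro h
        rcases eq_or_lt_of_le hw with hw0 | hwpos
        · rw [← hw0]; ring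
        · rw [(h hwpos).2]

/-- With common trust coefficient `λ > 1`, the social welfare is at most
`λ·ψ·Σ_{i≠j} W_{ij}`, with equality exactly when every connected pair shares a
community and holds the same opinion. -/
theorem stmt15 {n K : ℕ} (ψ lamv : ℝ)
    (hψ : ψ ∈ Set.Ioo (0 : ℝ) 1) (hlam : 1 < lamv)
    (x : Fin n → ℝ) (hx : ∀ i, x i ∈ Set.Icc (0 : ℝ) 1)
    (W : Matrix (Fin n) (Fin n) ℝ) (hW : ∀ i j, 0 ≤ W i j)
    (hWd : ∀ i, W i i = 0)
    (S : Matrix (Fin n) (Fin K) ℝ)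
    (hbin : ∀ i k, S i k = 0 ∨ S i k = 1)
    (hrow : ∀ i, ∑ k, S i k = 1) :
    (∑ i, ∑ j ∈ Finset.univ.erase i,
        (lamv * (∑ k, S i k * S j k) * (ψ - |x i - x j|) * W i j
          + (1 - ∑ k, S i k * S j k) * max (ψ - |x i - x j|) 0 * W i j)
      ≤ lamv * ψ * ∑ i, ∑ j ∈ Finset.univ.erase i, W i j) ∧
    ((∑ i, ∑ j ∈ Finset.univ.erase i,
        (lamv * (∑ k, S i k * S j k) * (ψ - |x i - x j|) * W i j
          + (1 - ∑ k, S i k * S j k) * max (ψ - |x i - x j|) 0 * W i j)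
      = lamv * ψ * ∑ i, ∑ j ∈ Finset.univ.erase i, W i j) ↔
      (∀ i j, j ≠ i → 0 < W i j → (∑ k, S i k * S j k) = 1 ∧ x i = x j)) := by
  obtain ⟨hψ0, hψ1⟩ := hψ
  -- s_ij ∈ {0,1}
  have hs01 : ∀ i j : Fin n, (∑ k, S i k * S j k) = 0 ∨ (∑ k, S i k * S j k) = 1 := by
    intro i j
    have hub : (∑ k, S i k * S j k) ≤ 1 := by
      rw [← hrow i]
      apply Finset.sum_le_sum
      intro k _
      rcases hbin i k with h | h <;> rcases hbin j k with h' | h' <;> simp [h, h']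
    rcases sum01' Finset.univ (fun k => S i k * S j k)
        (fun k _ => by rcases hbin i k with h | h <;> rcases hbin j k with h' | h' <;>
          simp [h, h']) with h | h
    · exact Or.inl h
    · exact Or.inr (le_antisymm hub h)
  have hd : ∀ i j : Fin n, ψ - |x i - x j| ≤ ψ := by
    intro i j; have := abs_nonneg (x i - x j); linarith
  have hkey := fun i j => key15 ψ lamv (ψ - |x i - x j|) (∑ k, S i k * S j k) (W i j)
    hψ0 hlam (hd i j) (hs01 i j) (hW i j)
  have hle : ∀ i, ∀ j ∈ Finset.univ.erase i,
      (lamv * (∑ k, S i k * S j k) * (ψ - |x i - x j|) * W i j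
        + (1 - ∑ k, S i k * S j k) * max (ψ - |x i - x j|) 0 * W i j)
      ≤ lamv * ψ * W i j := fun i j _ => (hkey i j).1
  have hsumle : ∀ i, (∑ j ∈ Finset.univ.erase i,
      (lamv * (∑ k, S i k * S j k) * (ψ - |x i - x j|) * W i j
        + (1 - ∑ k, S i k * S j k) * max (ψ - |x i - x j|) 0 * W i j))
      ≤ ∑ j ∈ Finset.univ.erase i, lamv * ψ * W i j := fun i =>
    Finset.sum_le_sum (hle i)
  constructor
  · calc _ ≤ ∑ i, ∑ j ∈ Finset.univ.erase i, lamv * ψ * W i j :=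
        Finset.sum_le_sum fun i _ => hsumle i
      _ = lamv * ψ * ∑ i, ∑ j ∈ Finset.univ.erase i, W i j := by
        rw [Finset.mul_sum]; congr 1; funext i; rw [Finset.mul_sum]
  · have hrhs : lamv * ψ * ∑ i, ∑ j ∈ Finset.univ.erase i, W i j
        = ∑ i, ∑ j ∈ Finset.univ.erase i, lamv * ψ * W i j := by
      rw [Finset.mul_sum]; congr 1; funext i; rw [Finset.mul_sum]
    rw [hrhs]
    rw [Finset.sum_eq_sum_iff_of_le fun i _ => hsumle i]
    constructor
    · intro h i j hji hWpos
      have hij := (Finset.sum_eq_sum_iff_of_le (hle i)).mp (h i (Finset.mem_univ i)) j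
        (Finset.mem_erase.mpr ⟨hji, Finset.mem_univ j⟩)
      obtain ⟨h1, h2⟩ := ((hkey i j).2.mp hij) hWpos
      refine ⟨h1, ?_⟩
      have : |x i - x j| = 0 := by linarith
      have := abs_eq_zero.mp this
      linarith
    · intro h i _
      apply (Finset.sum_eq_sum_iff_of_le (hle i)).mpr
      intro j hj
      apply (hkey i j).2.mpr
      intro hWpos
      obtain ⟨h1, h2⟩ := h i j (Finset.mem_erase.mp hj).1 hWpos
      exact ⟨h1, by rw [h2]; simp⟩
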